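/- Let n = k² be a perfect square with n > 9, and let γ be an integer with 1 ≤ γ ≤ √n − 1; set α_γ := γ/(1 + γ). In the lollipop graph L_n, the maximum density over subsets attaining fairness level α_γ equals (√n − 1 + 2γ)/(1 + γ), and consequently PoF(L_n, α_γ) = α_γ · (1 − 2/(√n − 1)). -/

import Mathlib

open Finset

/-- Number of edges of `G` with both endpoints in `S`. -/
def edgesIn {V : Type*} [Fintype V] [DecidableEq V] (G : SimpleGraph V)
    [DecidableRel G.Adj] (S : Finset V) : ℕ :=
  (G.edgeFinset.filter (fun e => ∀ v ∈ e, v ∈ S)).card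

/-- Density `ρ(S) = 2 e(S) / |S|` of the subgraph induced by `S`. -/
noncomputable def rho {V : Type*} [Fintype V] [DecidableEq V] (G : SimpleGraph V)
    [DecidableRel G.Adj] (S : Finset V) : ℝ :=
  2 * (edgesIn G S : ℝ) / S.card

/-- Fairness regularizer `r1(S) = |S ∩ Sp| / |S|`. -/
noncomputable def r1 {V : Type*} [DecidableEq V] (Sp S : Finset V) : ℝ :=
  ((S ∩ Sp).card : ℝ) / S.card

/-- The lollipop graph `L_n` on `n = k²` vertices: vertices `0, …, k-1` form a
clique (the unprotected vertices), vertices `k, …, k²-1` form a path (the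
protected vertices), and one endpoint of the path (vertex `k`) is joined to
one vertex of the clique (vertex `k-1`). -/
def lollipop (k : ℕ) : SimpleGraph (Fin (k * k)) where
  Adj u v := u ≠ v ∧ ((u.val < k ∧ v.val < k) ∨
      (u.val + 1 = v.val ∧ k ≤ v.val) ∨ (v.val + 1 = u.val ∧ k ≤ u.val))
  symm := by
    constructor
    intro u v h
    refine ⟨Ne.symm h.1, ?_⟩
    rcases h.2 with h | h | h
    · exact Or.inl ⟨h.2, h.1⟩
    · exact Or.inr (Or.inr h)
    · exact Or.inr (Or.inl h)
  loopless := by constructor; intro v h; exact h.1 rfl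

instance lollipopDecAdj (k : ℕ) : DecidableRel (lollipop k).Adj :=
  fun _ _ => inferInstanceAs (Decidable (_ ∧ _))

/-- The protected subset of the lollipop graph: the vertices of the path. -/
def lollipopProtected (k : ℕ) : Finset (Fin (k * k)) :=
  Finset.univ.filter (fun v => k ≤ v.val)

/-- The vertex set of the clique `C_√n` in the lollipop graph. -/
def lollipopClique (k : ℕ) : Finset (Fin (k * k)) :=
  Finset.univ.filter (fun v => v.val < k)

/-- Density of the densest subgraph: `ρ*_G = max_{∅ ≠ S ⊆ V} ρ(S)`. -/
noncomputable def rhoStar {V : Type*} [Fintype V] [DecidableEq V] (G : SimpleGraph V)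
    [DecidableRel G.Adj] : ℝ :=
  sSup {x : ℝ | ∃ S : Finset V, S.Nonempty ∧ rho G S = x}

/-- Density of the densest subgraph at fairness level `α`:
`ρ*_G(α) = max {ρ(S) : ∅ ≠ S ⊆ V, r1(S) = α}`. -/
noncomputable def rhoStarAlpha {V : Type*} [Fintype V] [DecidableEq V] (G : SimpleGraph V)
    [DecidableRel G.Adj] (Sp : Finset V) (α : ℝ) : ℝ :=
  sSup {x : ℝ | ∃ S : Finset V, S.Nonempty ∧ r1 Sp S = α ∧ rho G S = x}

/-- Price of fairness `PoF(G, α) = 1 - ρ*_G(α) / ρ*_G`. -/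
noncomputable def PoF {V : Type*} [Fintype V] [DecidableEq V] (G : SimpleGraph V)
    [DecidableRel G.Adj] (Sp : Finset V) (α : ℝ) : ℝ :=
  1 - rhoStarAlpha G Sp α / rhoStar G

/-! ### Auxiliary lemmas -/

lemma two_mul_edgesIn {V : Type*} [Fintype V] [DecidableEq V] (G : SimpleGraph V)
    [DecidableRel G.Adj] (S : Finset V) :
    ((S ×ˢ S).filter fun p => G.Adj p.1 p.2).card = 2 * edgesIn G S := by
  classical
  set F := G.edgeFinset.filter (fun e => ∀ v ∈ e, v ∈ S) with hF
  set P := (S ×ˢ S).filter (fun p => G.Adj p.1 p.2) with hP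
  have hmap : ∀ p ∈ P, Sym2.mk p.1 p.2 ∈ F := by
    rintro ⟨x, y⟩ hp
    simp only [hP, Finset.mem_filter, Finset.mem_product] at hp
    simp only [hF, Finset.mem_filter, SimpleGraph.mem_edgeFinset]
    refine ⟨hp.2, ?_⟩
    intro v hv
    rw [Sym2.mem_iff] at hv
    rcases hv with rfl | rfl
    · exact hp.1.1
    · exact hp.1.2
  rw [Finset.card_eq_sum_card_fiberwise hmap]
  rw [edgesIn, ← hF, mul_comm, ← smul_eq_mul, ← Finset.sum_const]
  refine Finset.sum_congr rfl ?_
  intro e he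
  induction e using Sym2.ind with
  | _ a b =>
    simp only [hF, Finset.mem_filter, SimpleGraph.mem_edgeFinset, SimpleGraph.mem_edgeSet] at he
    have hadj : G.Adj a b := he.1
    have ha : a ∈ S := he.2 a (by simp)
    have hb : b ∈ S := he.2 b (by simp)
    have hne : a ≠ b := hadj.ne
    have heq : P.filter (fun p => Sym2.mk p.1 p.2 = s(a,b)) = {(a,b), (b,a)} := by
      ext ⟨x, y⟩
      simp only [Finset.mem_filter, hP, Finset.mem_product, Finset.mem_insert,
        Finset.mem_singleton, Prod.mk.injEq, Sym2.eq_iff]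
      constructor
      · rintro ⟨-, (⟨rfl, rfl⟩ | ⟨rfl, rfl⟩)⟩
        · exact Or.inl ⟨rfl, rfl⟩
        · exact Or.inr ⟨rfl, rfl⟩
      · rintro (⟨rfl, rfl⟩ | ⟨rfl, rfl⟩)
        · exact ⟨⟨⟨ha, hb⟩, hadj⟩, Or.inl ⟨rfl, rfl⟩⟩
        · exact ⟨⟨⟨hb, ha⟩, hadj.symm⟩, Or.inr ⟨rfl, rfl⟩⟩
    rw [heq, Finset.card_insert_of_notMem (by simp [Prod.ext_iff]; intro h; exact absurd h hne),
      Finset.card_singleton]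

lemma rho_eq_pairs {V : Type*} [Fintype V] [DecidableEq V] (G : SimpleGraph V)
    [DecidableRel G.Adj] (S : Finset V) :
    rho G S = (((S ×ˢ S).filter fun p => G.Adj p.1 p.2).card : ℝ) / S.card := by
  rw [rho]
  congr 1
  exact_mod_cast (two_mul_edgesIn G S).symm

lemma card_filter_lt (n m : ℕ) (h : m ≤ n) :
    ((univ : Finset (Fin n)).filter fun v => v.val < m).card = m := by
  rw [← Finset.card_range m]
  refine Finset.card_bij' (fun v _ => v.val)
    (fun a ha => (⟨a, lt_of_lt_of_le (Finset.mem_range.mp ha) h⟩ : Fin n)) ?_ ?_ ?_ ?_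
  · intro v hv; simp at hv ⊢; exact hv
  · intro a ha; simp at ha ⊢; exact ha
  · intro v hv; rfl
  · intro a ha; rfl

lemma card_filter_between (n a m : ℕ) (h : m ≤ n) (ham : a ≤ m) :
    ((univ : Finset (Fin n)).filter fun v => a ≤ v.val ∧ v.val < m).card = m - a := by
  rw [← Finset.card_range (m - a)]
  refine Finset.card_bij' (fun v _ => v.val - a)
    (fun j hj => (⟨a + j, by simp at hj; omega⟩ : Fin n)) ?_ ?_ ?_ ?_
  · intro v hv; simp at hv ⊢; omega
  · intro j hj; simp at hj ⊢; omega
  · intro v hv; simp at hv; apply Fin.ext; simp; omega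
  · intro j hj; simp at hj ⊢

lemma lollipop_adj_iff {k : ℕ} {u v : Fin (k*k)} :
    (lollipop k).Adj u v ↔ u ≠ v ∧ ((u.val < k ∧ v.val < k) ∨
      (u.val + 1 = v.val ∧ k ≤ v.val) ∨ (v.val + 1 = u.val ∧ k ≤ u.val)) := Iff.rfl

lemma pairs_count (k m : ℕ) (hk : 2 ≤ k) (hkm : k ≤ m) (hm : m ≤ k*k) :
    (((univ.filter fun v : Fin (k*k) => v.val < m) ×ˢ
      (univ.filter fun v : Fin (k*k) => v.val < m)).filter
      fun p => (lollipop k).Adj p.1 p.2).card = k*(k-1) + 2*(m-k) := by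
  set S := univ.filter fun v : Fin (k*k) => v.val < m with hS
  set P := ((S ×ˢ S).filter fun p => (lollipop k).Adj p.1 p.2) with hPdef
  have hsplit := Finset.card_filter_add_card_filter_not
    (s := P) (p := fun p : Fin (k*k) × Fin (k*k) => p.1.val < k ∧ p.2.val < k)
  set P1 := P.filter (fun p => p.1.val < k ∧ p.2.val < k) with hP1
  set P2 := P.filter (fun p => ¬(p.1.val < k ∧ p.2.val < k)) with hP2
  have memP : ∀ p : Fin (k*k) × Fin (k*k), p ∈ P ↔
      (p.1.val < m ∧ p.2.val < m ∧ (lollipop k).Adj p.1 p.2) := by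
    intro p
    simp only [hPdef, Finset.mem_filter, Finset.mem_product, hS, Finset.mem_univ, true_and]
    tauto
  have hP1card : P1.card = k * k - k := by
    have he : P1 = (lollipopClique k).offDiag := by
      ext ⟨x, y⟩
      simp only [hP1, Finset.mem_filter, memP, Finset.mem_offDiag, lollipopClique,
        Finset.mem_univ, true_and, lollipop_adj_iff]
      constructor
      · rintro ⟨⟨hx, hy, hne, -⟩, hxk, hyk⟩
        exact ⟨hxk, hyk, hne⟩
      · rintro ⟨hxk, hyk, hne⟩
        exact ⟨⟨lt_of_lt_of_le hxk hkm, lt_of_lt_of_le hyk hkm,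
          hne, Or.inl ⟨hxk, hyk⟩⟩, hxk, hyk⟩
    have hc : (lollipopClique k).card = k := by
      rw [lollipopClique]; exact card_filter_lt (k*k) k (Nat.le_mul_of_pos_left k (by omega))
    rw [he, Finset.offDiag_card, hc]
  have caseP2 : ∀ p ∈ P2,
      (p.1.val + 1 = p.2.val ∧ k ≤ p.2.val ∧ p.2.val < m ∧ p.1.val < m) ∨
      (p.2.val + 1 = p.1.val ∧ k ≤ p.1.val ∧ p.1.val < m ∧ p.2.val < m) := by
    rintro p hp
    rw [hP2, Finset.mem_filter, memP] at hp
    obtain ⟨⟨h1, h2, -, hadj⟩, hnb⟩ := hp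
    rcases hadj with h | h | h
    · exact absurd h hnb
    · exact Or.inl ⟨h.1, h.2, h2, h1⟩
    · exact Or.inr ⟨h.1, h.2, h1, h2⟩
  have hswap : ∀ p ∈ P2, p.swap ∈ P2 := by
    rintro ⟨x, y⟩ hp
    rw [hP2, Finset.mem_filter, memP] at hp ⊢
    exact ⟨⟨hp.1.2.1, hp.1.1, hp.1.2.2.symm⟩, fun h => hp.2 ⟨h.2, h.1⟩⟩
  set P2a := P2.filter (fun p => p.1.val < p.2.val) with hP2a
  have hP2acard : P2a.card = m - k := by
    rw [← Finset.card_range (m - k)]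
    refine Finset.card_bij' (fun p _ => p.2.val - k)
      (fun j hj => ((⟨k - 1 + j, by simp at hj; omega⟩ : Fin (k*k)),
                    (⟨k + j, by simp at hj; omega⟩ : Fin (k*k)))) ?_ ?_ ?_ ?_
    · intro p hp
      rw [hP2a, Finset.mem_filter] at hp
      rcases caseP2 p hp.1 with h | h
      · simp; omega
      · omega
    · intro j hj
      simp only [Finset.mem_range] at hj
      rw [hP2a, Finset.mem_filter, hP2, Finset.mem_filter, memP]
      dsimp only
      refine ⟨⟨⟨show k - 1 + j < m by omega, show k + j < m by omega,
        Fin.ne_of_val_ne (show k - 1 + j ≠ k + j by omega),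
        Or.inr (Or.inl ⟨show k - 1 + j + 1 = k + j by omega, show k ≤ k + j by omega⟩)⟩,
        fun h => absurd h.2 (by omega)⟩, show k - 1 + j < k + j by omega⟩
    · intro p hp
      rw [hP2a, Finset.mem_filter] at hp
      rcases caseP2 p hp.1 with h | h
      · obtain ⟨h1, h2, h3, h4⟩ := h
        rw [Prod.ext_iff]
        refine ⟨Fin.ext ?_, Fin.ext ?_⟩
        · show k - 1 + (p.2.val - k) = p.1.val
          omega
        · show k + (p.2.val - k) = p.2.val
          omega
      · omega
    · intro j hj
      simp only [Finset.mem_range] at hj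
      show k + j - k = j
      omega
  have hP2split : P2a.card + (P2.filter (fun p => ¬ p.1.val < p.2.val)).card = P2.card := by
    rw [hP2a]
    exact Finset.card_filter_add_card_filter_not
      (s := P2) (p := fun p : Fin (k*k) × Fin (k*k) => p.1.val < p.2.val)
  have hP2bcard : (P2.filter (fun p => ¬ p.1.val < p.2.val)).card = m - k := by
    have he : P2.filter (fun p => ¬ p.1.val < p.2.val) = P2a.image Prod.swap := by
      ext p
      simp only [Finset.mem_filter, Finset.mem_image, hP2a]
      constructor
      · rintro ⟨hp, hlt⟩
        refine ⟨p.swap, ⟨hswap p hp, ?_⟩, Prod.swap_swap p⟩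
        rcases caseP2 p hp with h | h
        · omega
        · simp; omega
      · rintro ⟨q, ⟨hq, hlt⟩, rfl⟩
        exact ⟨hswap q hq, by simp; omega⟩
    rw [he, Finset.card_image_of_injective _ Prod.swap_injective, hP2acard]
  have hkk : k*(k-1) = k*k - k := by rw [Nat.mul_sub, mul_one]
  omega

lemma card_split (k : ℕ) (S : Finset (Fin (k*k))) :
    (S ∩ lollipopClique k).card + (S ∩ lollipopProtected k).card = S.card := by
  have h1 : S ∩ lollipopClique k = S.filter (fun v => v.val < k) := by
    ext v; simp [lollipopClique, Finset.mem_inter, Finset.mem_filter]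
  have h2 : S ∩ lollipopProtected k = S.filter (fun v => ¬ v.val < k) := by
    ext v; simp [lollipopProtected, Finset.mem_inter, Finset.mem_filter, not_lt]
  rw [h1, h2]
  exact Finset.card_filter_add_card_filter_not _

lemma pairs_bound (k : ℕ) (S : Finset (Fin (k*k))) :
    ((S ×ˢ S).filter fun p => (lollipop k).Adj p.1 p.2).card
      ≤ (S ∩ lollipopClique k).card * (S ∩ lollipopClique k).card
        - (S ∩ lollipopClique k).card + 2 * (S ∩ lollipopProtected k).card := by
  classical
  set P := ((S ×ˢ S).filter fun p => (lollipop k).Adj p.1 p.2) with hP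
  have hsplit : (P.filter (fun p => p.1.val < k ∧ p.2.val < k)).card
      + (P.filter (fun p => ¬(p.1.val < k ∧ p.2.val < k))).card = P.card :=
    Finset.card_filter_add_card_filter_not _
  set P1 := P.filter (fun p => p.1.val < k ∧ p.2.val < k) with hP1
  set P2 := P.filter (fun p => ¬(p.1.val < k ∧ p.2.val < k)) with hP2
  have memP : ∀ p : Fin (k*k) × Fin (k*k), p ∈ P ↔
      (p.1 ∈ S ∧ p.2 ∈ S ∧ (lollipop k).Adj p.1 p.2) := by
    intro p
    simp only [hP, Finset.mem_filter, Finset.mem_product]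
    tauto
  have h1 : P1.card ≤ (S ∩ lollipopClique k).card * (S ∩ lollipopClique k).card
      - (S ∩ lollipopClique k).card := by
    have hsub : P1 ⊆ (S ∩ lollipopClique k).offDiag := by
      rintro ⟨x, y⟩ hp
      rw [hP1, Finset.mem_filter, memP] at hp
      obtain ⟨⟨hx, hy, hadj⟩, hxk, hyk⟩ := hp
      rw [Finset.mem_offDiag]
      exact ⟨by simp [Finset.mem_inter, lollipopClique, hx, hxk],
             by simp [Finset.mem_inter, lollipopClique, hy, hyk], hadj.ne⟩
    calc P1.card ≤ _ := Finset.card_le_card hsub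
    _ = _ := Finset.offDiag_card _
  have caseP2 : ∀ p ∈ P2, p.1 ∈ S ∧ p.2 ∈ S ∧
      ((p.1.val + 1 = p.2.val ∧ k ≤ p.2.val) ∨ (p.2.val + 1 = p.1.val ∧ k ≤ p.1.val)) := by
    rintro p hp
    rw [hP2, Finset.mem_filter, memP] at hp
    obtain ⟨⟨hx, hy, hadj⟩, hnb⟩ := hp
    rcases hadj.2 with h | h | h
    · exact absurd h hnb
    · exact ⟨hx, hy, Or.inl h⟩
    · exact ⟨hx, hy, Or.inr h⟩
  have h2 : P2.card ≤ 2 * (S ∩ lollipopProtected k).card := by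
    have hle := Finset.card_le_card_of_injOn
      (f := fun p : Fin (k*k) × Fin (k*k) =>
        ((if p.1.val < p.2.val then p.2 else p.1), decide (p.1.val < p.2.val)))
      (s := P2) (t := (S ∩ lollipopProtected k) ×ˢ (univ : Finset Bool)) ?_ ?_
    · calc P2.card ≤ _ := hle
      _ = 2 * (S ∩ lollipopProtected k).card := by
        rw [Finset.card_product, Finset.card_univ, Fintype.card_bool, mul_comm]
    · intro p hp
      obtain ⟨hx, hy, hc⟩ := caseP2 p hp
      rw [Finset.mem_coe, Finset.mem_product]
      refine ⟨?_, Finset.mem_univ _⟩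
      dsimp only
      rcases hc with ⟨he, hk'⟩ | ⟨he, hk'⟩
      · rw [if_pos (by omega)]
        simp only [Finset.mem_inter, lollipopProtected, Finset.mem_filter, Finset.mem_univ,
          true_and]
        exact ⟨hy, hk'⟩
      · rw [if_neg (by omega)]
        simp only [Finset.mem_inter, lollipopProtected, Finset.mem_filter, Finset.mem_univ,
          true_and]
        exact ⟨hx, hk'⟩
    · intro p hp q hq heq
      obtain ⟨-, -, hcp⟩ := caseP2 p hp
      obtain ⟨-, -, hcq⟩ := caseP2 q hq
      simp only [Prod.mk.injEq, decide_eq_decide] at heq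
      obtain ⟨he1, he2⟩ := heq
      rw [Prod.ext_iff]
      by_cases hlt : p.1.val < p.2.val
      · have hlt' : q.1.val < q.2.val := he2.mp hlt
        rw [if_pos hlt, if_pos hlt'] at he1
        have hv := congrArg Fin.val he1
        have hp1 : p.1.val + 1 = p.2.val := by rcases hcp with h | h; exacts [h.1, by omega]
        have hq1 : q.1.val + 1 = q.2.val := by rcases hcq with h | h; exacts [h.1, by omega]
        exact ⟨Fin.ext (by omega), he1⟩
      · have hlt' : ¬ q.1.val < q.2.val := fun h => hlt (he2.mpr h)
        rw [if_neg hlt, if_neg hlt'] at he1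
        have hv := congrArg Fin.val he1
        have hp1 : p.2.val + 1 = p.1.val := by rcases hcp with h | h; exacts [by omega, h.1]
        have hq1 : q.2.val + 1 = q.1.val := by rcases hcq with h | h; exacts [by omega, h.1]
        exact ⟨he1, Fin.ext (by omega)⟩
  omega

lemma bddAbove_rhoSet {V : Type*} [Fintype V] [DecidableEq V] (G : SimpleGraph V)
    [DecidableRel G.Adj] :
    BddAbove {x : ℝ | ∃ S : Finset V, S.Nonempty ∧ rho G S = x} := by
  classical
  apply Set.Finite.bddAbove
  apply Set.Finite.subset (Set.finite_range (rho G))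
  rintro x ⟨S, -, rfl⟩
  exact ⟨S, rfl⟩

lemma bddAbove_rhoAlphaSet {V : Type*} [Fintype V] [DecidableEq V] (G : SimpleGraph V)
    [DecidableRel G.Adj] (Sp : Finset V) (α : ℝ) :
    BddAbove {x : ℝ | ∃ S : Finset V, S.Nonempty ∧ r1 Sp S = α ∧ rho G S = x} := by
  classical
  apply Set.Finite.bddAbove
  apply Set.Finite.subset (Set.finite_range (rho G))
  rintro x ⟨S, -, -, rfl⟩
  exact ⟨S, rfl⟩

theorem stmt8 (k : ℕ) (hk : 2 ≤ k) (hn : 9 < k * k)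
    (γ : ℕ) (hγ1 : 1 ≤ γ) (hγ2 : γ ≤ k - 1) :
    rhoStarAlpha (lollipop k) (lollipopProtected k) ((γ : ℝ) / (1 + γ)) =
      ((k : ℝ) - 1 + 2 * γ) / (1 + γ) ∧
    PoF (lollipop k) (lollipopProtected k) ((γ : ℝ) / (1 + γ)) =
      (γ : ℝ) / (1 + γ) * (1 - 2 / ((k : ℝ) - 1)) := by
  have hk4 : 4 ≤ k := by
    by_contra h
    push_neg at h
    interval_cases k <;> omega
  have hkk : k ≤ k * k := Nat.le_mul_of_pos_left k (by omega)
  have hcliq_card : (lollipopClique k).card = k := by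
    rw [lollipopClique]; exact card_filter_lt _ _ hkk
  set m := k + γ * k with hm
  have hmk : k ≤ m := Nat.le_add_right _ _
  have hmkk : m ≤ k * k := by
    have h1 : γ * k ≤ (k - 1) * k := Nat.mul_le_mul_right k hγ2
    have h2 : (k - 1) * k = k * k - k := by rw [Nat.sub_mul, one_mul]
    omega
  have hmgk : m - k = γ * k := by omega
  set W := univ.filter (fun v : Fin (k*k) => v.val < m) with hW
  have hWcard : W.card = m := card_filter_lt _ _ hmkk
  have hWne : W.Nonempty := Finset.card_pos.mp (by rw [hWcard]; omega)
  have hWpairs : ((W ×ˢ W).filter fun p => (lollipop k).Adj p.1 p.2).card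
      = k * (k-1) + 2 * (m - k) := pairs_count k m hk hmk hmkk
  have hWSp : (W ∩ lollipopProtected k).card = m - k := by
    have he : W ∩ lollipopProtected k
        = univ.filter (fun v : Fin (k*k) => k ≤ v.val ∧ v.val < m) := by
      ext v
      simp only [hW, lollipopProtected, Finset.mem_inter, Finset.mem_filter,
        Finset.mem_univ, true_and]
      tauto
    rw [he]; exact card_filter_between _ _ _ hmkk hmk
  have hγR : (0:ℝ) < 1 + (γ:ℝ) := by positivity
  have hkR : (0:ℝ) < (k:ℝ) := by exact_mod_cast (by omega : 0 < k)
  have hk4R : (4:ℝ) ≤ (k:ℝ) := by exact_mod_cast hk4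
  have hmR : ((m:ℕ):ℝ) = (k:ℝ) * (1 + γ) := by rw [hm]; push_cast; ring
  have hmRpos : (0:ℝ) < ((m:ℕ):ℝ) := by rw [hmR]; positivity
  -- rho of witness W
  have hrhoW : rho (lollipop k) W = ((k:ℝ) - 1 + 2 * γ) / (1 + γ) := by
    rw [rho_eq_pairs, hWpairs, hWcard]
    have hc : ((k * (k-1) + 2 * (m - k) : ℕ) : ℝ)
        = (k:ℝ) * ((k:ℝ) - 1 + 2 * γ) := by
      rw [hmgk]
      push_cast [Nat.cast_sub (by omega : 1 ≤ k)]
      ring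
    rw [hc, hmR]
    rw [div_eq_div_iff (by positivity) (by positivity)]
    ring
  -- r1 of witness W
  have hr1W : r1 (lollipopProtected k) W = (γ:ℝ) / (1 + γ) := by
    rw [r1, hWSp, hWcard, hmgk, hmR]
    push_cast
    rw [div_eq_div_iff (by positivity) (by positivity)]
    ring
  -- general bound ingredients
  have key : ∀ S : Finset (Fin (k*k)),
      (((S ×ˢ S).filter fun p => (lollipop k).Adj p.1 p.2).card : ℝ)
        ≤ ((S ∩ lollipopClique k).card : ℝ) * (S ∩ lollipopClique k).card
          - (S ∩ lollipopClique k).card + 2 * (S ∩ lollipopProtected k).card := by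
    intro S
    have hpb := pairs_bound k S
    have haa : (S ∩ lollipopClique k).card ≤
        (S ∩ lollipopClique k).card * (S ∩ lollipopClique k).card := by
      rcases Nat.eq_zero_or_pos (S ∩ lollipopClique k).card with h | h
      · simp [h]
      · exact Nat.le_mul_of_pos_left _ h
    calc (((S ×ˢ S).filter fun p => (lollipop k).Adj p.1 p.2).card : ℝ)
        ≤ (((S ∩ lollipopClique k).card * (S ∩ lollipopClique k).card
          - (S ∩ lollipopClique k).card + 2 * (S ∩ lollipopProtected k).card : ℕ) : ℝ) := by
          exact_mod_cast hpb
    _ = _ := by push_cast [Nat.cast_sub haa]; ring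
  -- rho of the clique
  have hrhoC : rho (lollipop k) (lollipopClique k) = (k:ℝ) - 1 := by
    have hp : (((lollipopClique k) ×ˢ (lollipopClique k)).filter
        fun p => (lollipop k).Adj p.1 p.2).card = k * (k-1) := by
      have := pairs_count k k hk le_rfl hkk
      simp only [Nat.sub_self, Nat.mul_zero, Nat.add_zero] at this
      unfold lollipopClique
      exact this
    rw [rho_eq_pairs, hp, hcliq_card]
    rw [div_eq_iff hkR.ne']
    push_cast [Nat.cast_sub (by omega : 1 ≤ k)]
    ring
  -- the densest subgraph has density k - 1
  have hrhoStar : rhoStar (lollipop k) = (k:ℝ) - 1 := by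
    have hCn : (lollipopClique k).Nonempty := by
      rw [← Finset.card_pos, hcliq_card]; omega
    apply le_antisymm
    · refine csSup_le ⟨(k:ℝ) - 1, lollipopClique k, hCn, hrhoC⟩ ?_
      rintro x ⟨S, hS, rfl⟩
      have hScard : (0:ℝ) < (S.card : ℝ) := by
        exact_mod_cast Finset.card_pos.mpr hS
      rw [rho_eq_pairs, div_le_iff₀ hScard]
      have hsplit : ((S.card : ℕ) : ℝ) = ((S ∩ lollipopClique k).card : ℝ)
          + ((S ∩ lollipopProtected k).card : ℝ) := by
        rw [← card_split k S]; push_cast; ring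
      set A := ((S ∩ lollipopClique k).card : ℝ) with hA
      set B := ((S ∩ lollipopProtected k).card : ℝ) with hB
      have haN : (S ∩ lollipopClique k).card ≤ k :=
        le_trans (Finset.card_le_card Finset.inter_subset_right) (le_of_eq hcliq_card)
      have hak : A ≤ (k:ℝ) := by rw [hA]; exact_mod_cast haN
      have hb0 : (0:ℝ) ≤ B := by rw [hB]; positivity
      have ha0 : (0:ℝ) ≤ A := by rw [hA]; positivity
      calc (((S ×ˢ S).filter fun p => (lollipop k).Adj p.1 p.2).card : ℝ)
          ≤ A * A - A + 2 * B := key S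
        _ = (A - 1) * A + 2 * B := by ring
        _ ≤ ((k:ℝ) - 1) * A + ((k:ℝ) - 1) * B := by
            have h1 : (A - 1) * A ≤ ((k:ℝ) - 1) * A :=
              mul_le_mul_of_nonneg_right (by linarith) ha0
            have h2 : 2 * B ≤ ((k:ℝ) - 1) * B :=
              mul_le_mul_of_nonneg_right (by linarith) hb0
            linarith
        _ = ((k:ℝ) - 1) * (S.card : ℝ) := by rw [hsplit]; ring
    · exact le_csSup (bddAbove_rhoSet _) ⟨lollipopClique k, hCn, hrhoC⟩
  -- the fair densest subgraph value
  have halpha : rhoStarAlpha (lollipop k) (lollipopProtected k) ((γ : ℝ) / (1 + γ)) =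
      ((k : ℝ) - 1 + 2 * γ) / (1 + γ) := by
    apply le_antisymm
    · refine csSup_le ⟨((k:ℝ) - 1 + 2*γ)/(1+γ), W, hWne, hr1W, hrhoW⟩ ?_
      rintro x ⟨S, hS, hr1S, rfl⟩
      have hScardN : 0 < S.card := Finset.card_pos.mpr hS
      have hScard : (0:ℝ) < (S.card : ℝ) := by exact_mod_cast hScardN
      have hsplit : ((S.card : ℕ) : ℝ) = ((S ∩ lollipopClique k).card : ℝ)
          + ((S ∩ lollipopProtected k).card : ℝ) := by
        rw [← card_split k S]; push_cast; ring
      set A := ((S ∩ lollipopClique k).card : ℝ) with hA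
      set B := ((S ∩ lollipopProtected k).card : ℝ) with hB
      have haN : (S ∩ lollipopClique k).card ≤ k :=
        le_trans (Finset.card_le_card Finset.inter_subset_right) (le_of_eq hcliq_card)
      have hak : A ≤ (k:ℝ) := by rw [hA]; exact_mod_cast haN
      have hb0 : (0:ℝ) ≤ B := by rw [hB]; positivity
      have ha0 : (0:ℝ) ≤ A := by rw [hA]; positivity
      -- from the fairness constraint, B = γ A
      have hBA : B = (γ:ℝ) * A := by
        rw [r1] at hr1S
        rw [div_eq_div_iff hScard.ne' hγR.ne'] at hr1S
        linear_combination hr1S + (γ:ℝ) * hsplit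
      have hA1 : (1:ℝ) ≤ A := by
        rcases Nat.eq_zero_or_pos (S ∩ lollipopClique k).card with h0 | h0
        · exfalso
          have hA0 : A = 0 := by rw [hA, h0]; norm_num
          have hB0 : B = 0 := by rw [hBA, hA0]; ring
          linarith [hScard, hsplit]
        · rw [hA]; exact_mod_cast h0
      have hkey := key S
      rw [rho_eq_pairs, div_le_div_iff₀ hScard hγR]
      calc (((S ×ˢ S).filter fun p => (lollipop k).Adj p.1 p.2).card : ℝ) * (1 + γ)
          ≤ (A * A - A + 2 * B) * (1 + γ) := by
            apply mul_le_mul_of_nonneg_right _ hγR.le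
            rw [hA, hB]; exact hkey
        _ = (A - 1 + 2*γ) * (A * (1 + γ)) := by rw [hBA]; ring
        _ ≤ ((k:ℝ) - 1 + 2*γ) * (A * (1 + γ)) := by
            apply mul_le_mul_of_nonneg_right (by linarith)
            positivity
        _ = ((k:ℝ) - 1 + 2*γ) * (S.card : ℝ) := by
            rw [hsplit, hBA]; ring
    · exact le_csSup (bddAbove_rhoAlphaSet _ _ _) ⟨W, hWne, hr1W, hrhoW⟩
  refine ⟨halpha, ?_⟩
  rw [PoF, hrhoStar, halpha]
  have h1 : (1:ℝ) + (γ:ℝ) ≠ 0 := hγR.ne'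
  have h2 : (k:ℝ) - 1 ≠ 0 := by nlinarith
  field_simp
  ring
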